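/- (Superadditivity of BTR under market unification, deterministic version.) Fix t markets with seller value vectors s₁,...,s_t and buyer value vectors b₁,...,b_t. Let BTR(s,b) denote the gains from trade achieved by the Buyer Trade Reduction mechanism on market (s,b). Then Σ_{i=1}^t BTR(s_i, b_i) ≤ BTR(s, b), where (s,b) is the unified market containing all sellers and all buyers. -/

import Mathlib

/-- The efficient trade size of the market `(s, b)`: the maximal number `q` such that the `q`
highest buyer values are each at least the corresponding of the `q` lowest seller values (ties
broken in favor of buyers).  Since `b^(j) - s^(j)` is nonincreasing in `j`, this is the number
of indices `j` with `b^(j) ≥ s^(j)`. -/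
noncomputable def tradeSize (s b : Multiset ℝ) : ℕ :=
  ((Finset.range (min (Multiset.card s) (Multiset.card b))).filter
    (fun j => (s.sort (· ≤ ·)).getD j 0
      ≤ (b.sort (· ≤ ·)).getD (Multiset.card b - 1 - j) 0)).card

/-- The gains from trade of the Buyer Trade Reduction mechanism on the market `(s, b)`:
with `q` the efficient trade size, if `b^(q+1)` exists and `b^(q+1) ≥ s^(q)` then all `q`
efficient pairs trade and the GFT is `Σ_{j=1}^{q} (b^(j) - s^(j))`; otherwise the last pair is
reduced and the GFT is `Σ_{j=1}^{q-1} (b^(j) - s^(j))`. -/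
noncomputable def btrGFT (s b : Multiset ℝ) : ℝ :=
  if tradeSize s b < Multiset.card b ∧
      (s.sort (· ≤ ·)).getD (tradeSize s b - 1) 0
        ≤ (b.sort (· ≤ ·)).getD (Multiset.card b - 1 - tradeSize s b) 0 then
    ∑ j ∈ Finset.range (tradeSize s b),
      ((b.sort (· ≤ ·)).getD (Multiset.card b - 1 - j) 0 - (s.sort (· ≤ ·)).getD j 0)
  else
    ∑ j ∈ Finset.range (tradeSize s b - 1),
      ((b.sort (· ≤ ·)).getD (Multiset.card b - 1 - j) 0 - (s.sort (· ≤ ·)).getD j 0)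

namespace BTRAux

noncomputable def sval (s : Multiset ℝ) (j : ℕ) : ℝ := (s.sort (· ≤ ·)).getD j 0

noncomputable def bval (b : Multiset ℝ) (j : ℕ) : ℝ :=
  (b.sort (· ≤ ·)).getD (Multiset.card b - 1 - j) 0

noncomputable def gft (s b : Multiset ℝ) (k : ℕ) : ℝ :=
  ∑ j ∈ Finset.range k, (bval b j - sval s j)

lemma btr_eq (s b : Multiset ℝ) :
    btrGFT s b = if tradeSize s b < Multiset.card b ∧
        sval s (tradeSize s b - 1) ≤ bval b (tradeSize s b) then gft s b (tradeSize s b)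
      else gft s b (tradeSize s b - 1) := rfl

lemma sorted_getD_mono {l : List ℝ} (h : l.Pairwise (· ≤ ·)) {i j : ℕ} (hij : i ≤ j)
    (hj : j < l.length) : l.getD i 0 ≤ l.getD j 0 := by
  rw [List.getD_eq_getElem l 0 (lt_of_le_of_lt hij hj), List.getD_eq_getElem l 0 hj]
  rcases eq_or_lt_of_le hij with rfl | hlt
  · rfl
  · simpa using List.pairwise_iff_get.1 h ⟨i, lt_of_le_of_lt hij hj⟩ ⟨j, hj⟩ hlt

lemma sval_mono {s : Multiset ℝ} {i j : ℕ} (hij : i ≤ j) (hj : j < Multiset.card s) :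
    sval s i ≤ sval s j :=
  sorted_getD_mono (s.pairwise_sort _) hij (by rwa [Multiset.length_sort])

lemma bval_anti {b : Multiset ℝ} {i j : ℕ} (hij : i ≤ j) (hj : j < Multiset.card b) :
    bval b j ≤ bval b i :=
  sorted_getD_mono (b.pairwise_sort _) (by omega) (by rw [Multiset.length_sort]; omega)

lemma downward_eq_range (A : Finset ℕ) (h : ∀ a ∈ A, ∀ c < a, c ∈ A) :
    A = Finset.range A.card := by
  ext k
  simp only [Finset.mem_range]
  constructor
  · intro hk
    have hsub : Finset.range (k + 1) ⊆ A := by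
      intro j hj
      simp only [Finset.mem_range] at hj
      rcases eq_or_lt_of_le (Nat.lt_succ_iff.1 hj) with rfl | hlt
      · exact hk
      · exact h k hk j hlt
    simpa using Finset.card_le_card hsub
  · intro hk
    by_contra hkA
    have hsub : A ⊆ Finset.range k := by
      intro a ha
      simp only [Finset.mem_range]
      by_contra hak
      push_neg at hak
      rcases eq_or_lt_of_le hak with rfl | hlt
      · exact hkA ha
      · exact hkA (h a ha k hlt)
    have := Finset.card_le_card hsub
    simp only [Finset.card_range] at this
    omega

lemma tradeSize_le (s b : Multiset ℝ) :
    tradeSize s b ≤ min (Multiset.card s) (Multiset.card b) := by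
  unfold tradeSize
  exact le_trans (Finset.card_filter_le _ _) (by simp)

lemma ts_iff (s b : Multiset ℝ) (j : ℕ) :
    j < tradeSize s b ↔
      j < min (Multiset.card s) (Multiset.card b) ∧ sval s j ≤ bval b j := by
  classical
  set N := min (Multiset.card s) (Multiset.card b) with hN
  set A := (Finset.range N).filter
    (fun j => (s.sort (· ≤ ·)).getD j 0
      ≤ (b.sort (· ≤ ·)).getD (Multiset.card b - 1 - j) 0) with hA
  have hmem : ∀ i, i ∈ A ↔ i < N ∧ sval s i ≤ bval b i := by
    intro i
    simp only [hA, Finset.mem_filter, Finset.mem_range]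
    exact Iff.rfl
  have hdc : ∀ a ∈ A, ∀ c < a, c ∈ A := by
    intro a ha c hc
    rw [hmem] at ha ⊢
    obtain ⟨haN, hav⟩ := ha
    refine ⟨lt_trans hc haN, ?_⟩
    calc sval s c ≤ sval s a := sval_mono (le_of_lt hc) (by omega)
      _ ≤ bval b a := hav
      _ ≤ bval b c := bval_anti (le_of_lt hc) (by omega)
  have hrange := downward_eq_range A hdc
  have hts : tradeSize s b = A.card := rfl
  constructor
  · intro hj
    have : j ∈ A := by rw [hrange]; simpa [hts] using hj
    exact (hmem j).1 this
  · intro hj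
    have : j ∈ A := (hmem j).2 hj
    rw [hrange] at this
    simpa [hts] using this

lemma ts_pos (s b : Multiset ℝ) {j : ℕ} (hj : j < tradeSize s b) : sval s j ≤ bval b j :=
  ((ts_iff s b j).1 hj).2

lemma ts_neg (s b : Multiset ℝ) {j : ℕ}
    (hj : j < min (Multiset.card s) (Multiset.card b)) (hj2 : tradeSize s b ≤ j) :
    bval b j < sval s j := by
  by_contra hc
  push_neg at hc
  have := (ts_iff s b j).2 ⟨hj, hc⟩
  omega

end BTRAux
namespace BTRAux

lemma sum_range_getD (l : List ℝ) (k : ℕ) (hk : k ≤ l.length) :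
    ∑ j ∈ Finset.range k, l.getD j 0 = (l.take k).sum := by
  induction k with
  | zero => simp
  | succ k ih =>
    rw [Finset.sum_range_succ, ih (by omega), List.getD_eq_getElem l 0 (by omega),
      List.sum_take_succ l k (by omega)]

lemma sum_range_sval (s : Multiset ℝ) (k : ℕ) (hk : k ≤ Multiset.card s) :
    ∑ j ∈ Finset.range k, sval s j = ((s.sort (· ≤ ·)).take k).sum :=
  sum_range_getD _ _ (by rwa [Multiset.length_sort])

lemma sum_range_bval (b : Multiset ℝ) (k : ℕ) (hk : k ≤ Multiset.card b) :
    ∑ j ∈ Finset.range k, bval b j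
      = ((b.sort (· ≤ ·)).drop (Multiset.card b - k)).sum := by
  have hlen : (b.sort (· ≤ ·)).length = Multiset.card b := Multiset.length_sort _
  induction k with
  | zero =>
    simp only [Finset.range_zero, Finset.sum_empty, Nat.sub_zero]
    rw [List.drop_eq_nil_of_le (by omega)]
    simp
  | succ k ih =>
    rw [Finset.sum_range_succ, ih (by omega)]
    have h1 : Multiset.card b - (k + 1) < (b.sort (· ≤ ·)).length := by omega
    rw [List.drop_eq_getElem_cons h1, List.sum_cons]
    have h2 : Multiset.card b - (k + 1) + 1 = Multiset.card b - k := by omega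
    have h3 : Multiset.card b - 1 - k = Multiset.card b - (k + 1) := by omega
    rw [h2]
    show (((b.sort (· ≤ ·)).drop (Multiset.card b - k)).sum
      + (b.sort (· ≤ ·)).getD (Multiset.card b - 1 - k) 0) = _
    rw [h3, List.getD_eq_getElem _ 0 h1]
    ring

lemma msum_eq_sort_sum (s : Multiset ℝ) : s.sum = (s.sort (· ≤ ·)).sum := by
  conv_lhs => rw [← Multiset.sort_eq s (· ≤ ·)]
  exact Multiset.sum_coe _

lemma sum_sval_self (s : Multiset ℝ) :
    ∑ j ∈ Finset.range (Multiset.card s), sval s j = s.sum := by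
  rw [sum_range_sval s _ le_rfl, msum_eq_sort_sum]
  congr 1
  exact List.take_of_length_le (by rw [Multiset.length_sort])

lemma sum_bval_self (b : Multiset ℝ) :
    ∑ j ∈ Finset.range (Multiset.card b), bval b j = b.sum := by
  rw [sum_range_bval b _ le_rfl, msum_eq_sort_sum]
  simp

lemma countP_sort (p : ℝ → Prop) [DecidablePred p] (s : Multiset ℝ) :
    s.countP p = (s.sort (· ≤ ·)).countP (fun x => decide (p x)) := by
  conv_lhs => rw [← Multiset.sort_eq s (· ≤ ·)]
  exact Multiset.coe_countP _ _

lemma countP_of_sval_le {s : Multiset ℝ} {j : ℕ} {v : ℝ} (hj : j < Multiset.card s)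
    (h : sval s j ≤ v) : j + 1 ≤ s.countP (fun x => x ≤ v) := by
  classical
  have hlen : (s.sort (· ≤ ·)).length = Multiset.card s := Multiset.length_sort _
  rw [countP_sort]
  have htake : ((s.sort (· ≤ ·)).take (j + 1)).countP (fun x => decide (x ≤ v)) = j + 1 := by
    rw [List.countP_eq_length.2, List.length_take]
    · omega
    · intro a ha
      rw [List.mem_take_iff_getElem] at ha
      obtain ⟨i, hi, rfl⟩ := ha
      have hi' : i < j + 1 := lt_of_lt_of_le hi (min_le_left _ _)
      simp only [decide_eq_true_eq]
      calc (s.sort (· ≤ ·))[i] = (s.sort (· ≤ ·)).getD i 0 :=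
            (List.getD_eq_getElem _ 0 (by omega)).symm
        _ ≤ (s.sort (· ≤ ·)).getD j 0 := sorted_getD_mono (s.pairwise_sort _) (by omega) (by omega)
        _ ≤ v := h
  calc j + 1 = _ := htake.symm
    _ ≤ _ := (List.take_sublist _ _).countP_le

lemma sval_le_of_countP {s : Multiset ℝ} {j : ℕ} {v : ℝ} (hj : j < Multiset.card s)
    (h : j + 1 ≤ s.countP (fun x => x ≤ v)) : sval s j ≤ v := by
  classical
  by_contra hc
  push_neg at hc
  have hlen : (s.sort (· ≤ ·)).length = Multiset.card s := Multiset.length_sort _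
  rw [countP_sort] at h
  have hsplit : (s.sort (· ≤ ·)).countP (fun x => decide (x ≤ v))
      = ((s.sort (· ≤ ·)).take j).countP (fun x => decide (x ≤ v))
        + ((s.sort (· ≤ ·)).drop j).countP (fun x => decide (x ≤ v)) := by
    rw [← List.countP_append, List.take_append_drop]
  have hdrop : ((s.sort (· ≤ ·)).drop j).countP (fun x => decide (x ≤ v)) = 0 := by
    rw [List.countP_eq_zero]
    intro a ha
    rw [List.mem_iff_getElem] at ha
    obtain ⟨i, hi, rfl⟩ := ha
    have hi' : i < (s.sort (· ≤ ·)).length - j := by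
      simpa [List.length_drop] using hi
    rw [List.getElem_drop]
    simp only [decide_eq_true_eq, not_le]
    calc v < (s.sort (· ≤ ·)).getD j 0 := hc
      _ ≤ (s.sort (· ≤ ·)).getD (j + i) 0 := sorted_getD_mono (s.pairwise_sort _) (by omega) (by omega)
      _ = (s.sort (· ≤ ·))[j + i] := List.getD_eq_getElem _ 0 (by omega)
  have htk : ((s.sort (· ≤ ·)).take j).countP (fun x => decide (x ≤ v)) ≤ j :=
    le_trans List.countP_le_length (by rw [List.length_take]; omega)
  omega

lemma countP_of_le_bval {b : Multiset ℝ} {j : ℕ} {v : ℝ} (hj : j < Multiset.card b)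
    (h : v ≤ bval b j) : j + 1 ≤ b.countP (fun x => v ≤ x) := by
  classical
  have hlen : (b.sort (· ≤ ·)).length = Multiset.card b := Multiset.length_sort _
  rw [countP_sort]
  have hdrop : ((b.sort (· ≤ ·)).drop (Multiset.card b - 1 - j)).countP
      (fun x => decide (v ≤ x)) = j + 1 := by
    rw [List.countP_eq_length.2, List.length_drop]
    · omega
    · intro a ha
      rw [List.mem_iff_getElem] at ha
      obtain ⟨i, hi, rfl⟩ := ha
      have hi' : i < (b.sort (· ≤ ·)).length - (Multiset.card b - 1 - j) := by
        simpa [List.length_drop] using hi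
      rw [List.getElem_drop]
      simp only [decide_eq_true_eq]
      calc v ≤ (b.sort (· ≤ ·)).getD (Multiset.card b - 1 - j) 0 := h
        _ ≤ (b.sort (· ≤ ·)).getD (Multiset.card b - 1 - j + i) 0 :=
            sorted_getD_mono (b.pairwise_sort _) (by omega) (by omega)
        _ = (b.sort (· ≤ ·))[Multiset.card b - 1 - j + i] := List.getD_eq_getElem _ 0 (by omega)
  calc j + 1 = _ := hdrop.symm
    _ ≤ _ := (List.drop_sublist _ _).countP_le

lemma le_bval_of_countP {b : Multiset ℝ} {j : ℕ} {v : ℝ} (hj : j < Multiset.card b)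
    (h : j + 1 ≤ b.countP (fun x => v ≤ x)) : v ≤ bval b j := by
  classical
  by_contra hc
  push_neg at hc
  have hlen : (b.sort (· ≤ ·)).length = Multiset.card b := Multiset.length_sort _
  rw [countP_sort] at h
  have hsplit : (b.sort (· ≤ ·)).countP (fun x => decide (v ≤ x))
      = ((b.sort (· ≤ ·)).take (Multiset.card b - j)).countP (fun x => decide (v ≤ x))
        + ((b.sort (· ≤ ·)).drop (Multiset.card b - j)).countP (fun x => decide (v ≤ x)) := by
    rw [← List.countP_append, List.take_append_drop]
  have htake : ((b.sort (· ≤ ·)).take (Multiset.card b - j)).countP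
      (fun x => decide (v ≤ x)) = 0 := by
    rw [List.countP_eq_zero]
    intro a ha
    rw [List.mem_take_iff_getElem] at ha
    obtain ⟨i, hi, rfl⟩ := ha
    have hi' : i < Multiset.card b - j := lt_of_lt_of_le hi (min_le_left _ _)
    simp only [decide_eq_true_eq, not_le]
    calc (b.sort (· ≤ ·))[i] = (b.sort (· ≤ ·)).getD i 0 :=
          (List.getD_eq_getElem _ 0 (by omega)).symm
      _ ≤ (b.sort (· ≤ ·)).getD (Multiset.card b - 1 - j) 0 :=
          sorted_getD_mono (b.pairwise_sort _) (by omega) (by omega)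
      _ < v := hc
  have hdr : ((b.sort (· ≤ ·)).drop (Multiset.card b - j)).countP
      (fun x => decide (v ≤ x)) ≤ j :=
    le_trans List.countP_le_length (by rw [List.length_drop]; omega)
  omega

end BTRAux
namespace BTRAux

lemma sval_le_sval {s' s : Multiset ℝ} (hle : s' ≤ s) {j : ℕ} (hj : j < Multiset.card s') :
    sval s j ≤ sval s' j := by
  classical
  exact sval_le_of_countP (lt_of_lt_of_le hj (Multiset.card_le_card hle))
    (le_trans (countP_of_sval_le hj le_rfl) (Multiset.countP_le_of_le _ hle))

lemma bval_le_bval {b' b : Multiset ℝ} (hle : b' ≤ b) {j : ℕ} (hj : j < Multiset.card b') :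
    bval b' j ≤ bval b j := by
  classical
  exact le_bval_of_countP (lt_of_lt_of_le hj (Multiset.card_le_card hle))
    (le_trans (countP_of_le_bval hj le_rfl) (Multiset.countP_le_of_le _ hle))

lemma sum_sval_le {s' s : Multiset ℝ} (hle : s' ≤ s) :
    ∑ j ∈ Finset.range (Multiset.card s'), sval s j ≤ s'.sum := by
  rw [← sum_sval_self s']
  exact Finset.sum_le_sum fun j hj => sval_le_sval hle (Finset.mem_range.1 hj)

lemma sum_bval_ge {b' b : Multiset ℝ} (hle : b' ≤ b) :
    b'.sum ≤ ∑ j ∈ Finset.range (Multiset.card b'), bval b j := by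
  rw [← sum_bval_self b']
  exact Finset.sum_le_sum fun j hj => bval_le_bval hle (Finset.mem_range.1 hj)

lemma sval_mem {s : Multiset ℝ} {j : ℕ} (hj : j < Multiset.card s) : sval s j ∈ s := by
  have hlen : (s.sort (· ≤ ·)).length = Multiset.card s := Multiset.length_sort _
  rw [sval, List.getD_eq_getElem _ 0 (by omega)]
  rw [← Multiset.mem_sort (· ≤ ·)]
  exact List.getElem_mem _

lemma gt_bval_imp {b : Multiset ℝ} {x : ℝ} {q : ℕ} (hx : x ∈ b) (hq1 : 1 ≤ q)
    (hqm : q < Multiset.card b) (h : bval b q < x) : bval b (q - 1) ≤ x := by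
  have hlen : (b.sort (· ≤ ·)).length = Multiset.card b := Multiset.length_sort _
  rw [← Multiset.mem_sort (· ≤ ·), List.mem_iff_getElem] at hx
  obtain ⟨p, hp, rfl⟩ := hx
  by_cases hpc : p < Multiset.card b - q
  · exfalso
    have : (b.sort (· ≤ ·))[p] ≤ bval b q := by
      rw [bval, List.getD_eq_getElem _ 0 (by omega)]
      have := sorted_getD_mono (b.pairwise_sort (· ≤ ·)) (i := p)
        (j := Multiset.card b - 1 - q) (by omega) (by omega)
      rwa [List.getD_eq_getElem _ 0 (by omega), List.getD_eq_getElem _ 0 (by omega)] at this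
    linarith
  · rw [bval]
    have h1 : Multiset.card b - 1 - (q - 1) = Multiset.card b - q := by omega
    rw [h1]
    have := sorted_getD_mono (b.pairwise_sort (· ≤ ·)) (i := Multiset.card b - q) (j := p)
      (by omega) (by omega)
    rw [List.getD_eq_getElem _ 0 (by omega), List.getD_eq_getElem _ 0 (by omega)] at this
    rw [List.getD_eq_getElem _ 0 (by omega)]
    exact this

lemma gft_split (s b : Multiset ℝ) {k₁ k₂ : ℕ} (h : k₁ ≤ k₂) :
    gft s b k₂ = gft s b k₁ + ∑ j ∈ Finset.Ico k₁ k₂, (bval b j - sval s j) := by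
  rw [gft, gft, Finset.range_eq_Ico, Finset.range_eq_Ico]
  exact (Finset.sum_Ico_consecutive (fun j => bval b j - sval s j) (Nat.zero_le k₁) h).symm

lemma gft_mono {s b : Multiset ℝ} {k₁ k₂ : ℕ} (h : k₁ ≤ k₂) (h2 : k₂ ≤ tradeSize s b) :
    gft s b k₁ ≤ gft s b k₂ := by
  rw [gft_split s b h]
  have : (0:ℝ) ≤ ∑ j ∈ Finset.Ico k₁ k₂, (bval b j - sval s j) := by
    apply Finset.sum_nonneg
    intro j hj
    rw [Finset.mem_Ico] at hj
    have := ts_pos s b (lt_of_lt_of_le hj.2 h2)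
    linarith
  linarith

lemma gft_anti {s b : Multiset ℝ} {k₁ k₂ : ℕ} (hq : tradeSize s b ≤ k₁) (h : k₁ ≤ k₂)
    (h2 : k₂ ≤ min (Multiset.card s) (Multiset.card b)) : gft s b k₂ ≤ gft s b k₁ := by
  rw [gft_split s b h]
  have : ∑ j ∈ Finset.Ico k₁ k₂, (bval b j - sval s j) ≤ 0 := by
    apply Finset.sum_nonpos
    intro j hj
    rw [Finset.mem_Ico] at hj
    have := ts_neg s b (lt_of_lt_of_le hj.2 h2) (le_trans hq hj.1)
    linarith
  linarith

end BTRAux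
namespace BTRAux

lemma ub (s b s' b' : Multiset ℝ) (hs : s' ≤ s) (hb : b' ≤ b)
    (hcard : Multiset.card s' + Multiset.card b' = Multiset.card s)
    (hfeas : ∀ y ∈ s - s', ∃ x ∈ b - b', y ≤ x) :
    s'.sum + b'.sum ≤ btrGFT s b + s.sum := by
  classical
  have hk : Multiset.card b' ≤ Multiset.card b := Multiset.card_le_card hb
  have hkn : Multiset.card b' ≤ Multiset.card s := by omega
  have hq2 := tradeSize_le s b
  have hEs_card : Multiset.card (s - s') = Multiset.card b' := by
    rw [Multiset.card_sub hs]; omega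
  have hsums : s'.sum + (s - s').sum = s.sum := by
    have h1 : (s - s') + s' = s := tsub_add_cancel_of_le hs
    calc s'.sum + (s - s').sum = ((s - s') + s').sum := by rw [Multiset.sum_add]; ring
      _ = s.sum := by rw [h1]
  have hEs_sum : ∑ j ∈ Finset.range (Multiset.card b'), sval s j ≤ (s - s').sum := by
    have := sum_sval_le (s' := s - s') (s := s) tsub_le_self
    rwa [hEs_card] at this
  have hb'_sum : b'.sum ≤ ∑ j ∈ Finset.range (Multiset.card b'), bval b j := sum_bval_ge hb
  have hgft : gft s b (Multiset.card b')
      = ∑ j ∈ Finset.range (Multiset.card b'), bval b j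
        - ∑ j ∈ Finset.range (Multiset.card b'), sval s j := by
    rw [gft, Finset.sum_sub_distrib]
  have hgen : s'.sum + b'.sum ≤ s.sum + gft s b (Multiset.card b') := by linarith
  rw [btr_eq]
  split_ifs with hcond
  · -- no reduction
    have : gft s b (Multiset.card b') ≤ gft s b (tradeSize s b) := by
      rcases le_or_gt (Multiset.card b') (tradeSize s b) with h | h
      · exact gft_mono h le_rfl
      · exact gft_anti le_rfl (le_of_lt h) (le_min hkn hk)
    linarith
  · rcases lt_or_ge (Multiset.card b') (tradeSize s b) with hlt | hge
    · have : gft s b (Multiset.card b') ≤ gft s b (tradeSize s b - 1) :=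
        gft_mono (by omega) (by omega)
      linarith
    · rcases Nat.eq_zero_or_pos (tradeSize s b) with hq0 | hq1
      · have h1 : gft s b (Multiset.card b') ≤ gft s b 0 :=
          gft_anti (by omega) (Nat.zero_le _) (le_min hkn hk)
        have h2 : gft s b 0 = 0 := by simp [gft]
        have h3 : tradeSize s b - 1 = 0 := by omega
        rw [h3, h2]
        rw [h2] at h1
        linarith
      · -- q ≥ 1 and card b' ≥ q
        have hkpos : 1 ≤ Multiset.card b' := le_trans hq1 hge
        have hymem : sval (s - s') (Multiset.card b' - 1) ∈ s - s' :=
          sval_mem (by omega)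
        obtain ⟨x, hxE, hyx⟩ := hfeas _ hymem
        have hky : sval s (Multiset.card b' - 1) ≤ x :=
          le_trans (sval_le_sval tsub_le_self (by omega)) hyx
        push_neg at hcond
        have hqm : tradeSize s b < Multiset.card b := by
          by_contra hc
          have hbb : Multiset.card (b - b') = 0 := by rw [Multiset.card_sub hb]; omega
          rw [Multiset.card_eq_zero.1 hbb] at hxE
          simp at hxE
        have hred : bval b (tradeSize s b) < sval s (tradeSize s b - 1) := hcond hqm
        have hkm : Multiset.card b' < Multiset.card b := by
          by_contra hc
          have hbb : Multiset.card (b - b') = 0 := by rw [Multiset.card_sub hb]; omega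
          rw [Multiset.card_eq_zero.1 hbb] at hxE
          simp at hxE
        have hxq : bval b (tradeSize s b) < x :=
          lt_of_lt_of_le hred (le_trans (sval_mono (by omega) (by omega)) hky)
        have hxb : x ∈ b := Multiset.mem_of_le tsub_le_self hxE
        have hxq1 : bval b (tradeSize s b - 1) ≤ x := gt_bval_imp hxb hq1 hqm hxq
        have hbx : b' + {x} ≤ b := by
          have h1 : ({x} : Multiset ℝ) ≤ b - b' := Multiset.singleton_le.2 hxE
          calc b' + {x} ≤ b' + (b - b') := add_le_add_right h1 _
            _ = b := by rw [add_comm]; exact tsub_add_cancel_of_le hb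
        have hb'x : b'.sum + x ≤ ∑ j ∈ Finset.range (Multiset.card b' + 1), bval b j := by
          have h2 := sum_bval_ge hbx
          rwa [Multiset.card_add, Multiset.card_singleton, Multiset.sum_add,
            Multiset.sum_singleton] at h2
        -- core estimate
        have hsplitb : ∑ j ∈ Finset.range (Multiset.card b' + 1), bval b j
            = ∑ j ∈ Finset.range (tradeSize s b - 1), bval b j
              + ∑ j ∈ Finset.Ico (tradeSize s b - 1) (Multiset.card b' + 1), bval b j := by
          rw [Finset.range_eq_Ico,
            ← Finset.sum_Ico_consecutive (fun j => bval b j) (Nat.zero_le (tradeSize s b - 1))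
              (by omega : tradeSize s b - 1 ≤ Multiset.card b' + 1), Finset.range_eq_Ico]
        have hsplits : ∑ j ∈ Finset.range (Multiset.card b'), sval s j
            = ∑ j ∈ Finset.range (tradeSize s b - 1), sval s j
              + ∑ j ∈ Finset.Ico (tradeSize s b - 1) (Multiset.card b'), sval s j := by
          rw [Finset.range_eq_Ico,
            ← Finset.sum_Ico_consecutive (fun j => sval s j) (Nat.zero_le (tradeSize s b - 1))
              (by omega : tradeSize s b - 1 ≤ Multiset.card b'), Finset.range_eq_Ico]
        have hpeel : ∑ j ∈ Finset.Ico (tradeSize s b - 1) (Multiset.card b' + 1), bval b j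
            = bval b (tradeSize s b - 1)
              + ∑ j ∈ Finset.Ico (tradeSize s b) (Multiset.card b' + 1), bval b j := by
          rw [Finset.sum_eq_sum_Ico_succ_bot (by omega : tradeSize s b - 1 < Multiset.card b' + 1)]
          have h71 : tradeSize s b - 1 + 1 = tradeSize s b := by omega
          rw [h71]
        have hpt : ∑ j ∈ Finset.Ico (tradeSize s b) (Multiset.card b' + 1), bval b j
            ≤ ∑ j ∈ Finset.Ico (tradeSize s b - 1) (Multiset.card b'), sval s j := by
          rw [Finset.sum_Ico_eq_sum_range, Finset.sum_Ico_eq_sum_range]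
          have heq : Multiset.card b' + 1 - tradeSize s b
              = Multiset.card b' - (tradeSize s b - 1) := by omega
          rw [heq]
          apply Finset.sum_le_sum
          intro i hi
          rw [Finset.mem_range] at hi
          have h1 : bval b (tradeSize s b + i) ≤ bval b (tradeSize s b) :=
            bval_anti (by omega) (by omega)
          have h2 : sval s (tradeSize s b - 1) ≤ sval s (tradeSize s b - 1 + i) :=
            sval_mono (by omega) (by omega)
          linarith
        have hgftq : gft s b (tradeSize s b - 1)
            = ∑ j ∈ Finset.range (tradeSize s b - 1), bval b j
              - ∑ j ∈ Finset.range (tradeSize s b - 1), sval s j := by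
          rw [gft, Finset.sum_sub_distrib]
        linarith
end BTRAux
namespace BTRAux

lemma lb_aux (s b : Multiset ℝ) (k : ℕ) (hks : k ≤ Multiset.card s)
    (hkb : k ≤ Multiset.card b) (hbtr : btrGFT s b = gft s b k)
    (hfe : 1 ≤ k → k < Multiset.card b ∧ sval s (k - 1) ≤ bval b k) :
    ∃ s' b' : Multiset ℝ, s' ≤ s ∧ b' ≤ b ∧
      Multiset.card s' + Multiset.card b' = Multiset.card s ∧
      (∀ y ∈ s - s', ∃ x ∈ b - b', y ≤ x) ∧
      btrGFT s b + s.sum = s'.sum + b'.sum := by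
  classical
  have hls : (s.sort (· ≤ ·)).length = Multiset.card s := Multiset.length_sort _
  have hlb : (b.sort (· ≤ ·)).length = Multiset.card b := Multiset.length_sort _
  refine ⟨(((s.sort (· ≤ ·)).drop k : List ℝ) : Multiset ℝ),
    (((b.sort (· ≤ ·)).drop (Multiset.card b - k) : List ℝ) : Multiset ℝ), ?_, ?_, ?_, ?_, ?_⟩
  · have h1 : (((s.sort (· ≤ ·)).drop k : List ℝ) : Multiset ℝ) ≤ ↑(s.sort (· ≤ ·)) :=
      Multiset.coe_le.2 (List.drop_sublist _ _).subperm
    rwa [Multiset.sort_eq] at h1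
  · have h1 : (((b.sort (· ≤ ·)).drop (Multiset.card b - k) : List ℝ) : Multiset ℝ)
        ≤ ↑(b.sort (· ≤ ·)) := Multiset.coe_le.2 (List.drop_sublist _ _).subperm
    rwa [Multiset.sort_eq] at h1
  · rw [Multiset.coe_card, Multiset.coe_card, List.length_drop, List.length_drop]
    omega
  · -- feasibility
    have hsub : s - (((s.sort (· ≤ ·)).drop k : List ℝ) : Multiset ℝ)
        = (((s.sort (· ≤ ·)).take k : List ℝ) : Multiset ℝ) := by
      have h2 : (((s.sort (· ≤ ·)).take k : List ℝ) : Multiset ℝ)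
          + (((s.sort (· ≤ ·)).drop k : List ℝ) : Multiset ℝ) = s := by
        rw [Multiset.coe_add, List.take_append_drop, Multiset.sort_eq]
      have h3 := congrArg (fun z : Multiset ℝ =>
        z - (((s.sort (· ≤ ·)).drop k : List ℝ) : Multiset ℝ)) h2
      simp only [add_tsub_cancel_right] at h3
      exact h3.symm
    have hsubB : b - (((b.sort (· ≤ ·)).drop (Multiset.card b - k) : List ℝ) : Multiset ℝ)
        = (((b.sort (· ≤ ·)).take (Multiset.card b - k) : List ℝ) : Multiset ℝ) := by
      have h2 : (((b.sort (· ≤ ·)).take (Multiset.card b - k) : List ℝ) : Multiset ℝ)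
          + (((b.sort (· ≤ ·)).drop (Multiset.card b - k) : List ℝ) : Multiset ℝ) = b := by
        rw [Multiset.coe_add, List.take_append_drop, Multiset.sort_eq]
      have h3 := congrArg (fun z : Multiset ℝ =>
        z - (((b.sort (· ≤ ·)).drop (Multiset.card b - k) : List ℝ) : Multiset ℝ)) h2
      simp only [add_tsub_cancel_right] at h3
      exact h3.symm
    intro y hy
    rw [hsub, Multiset.mem_coe, List.mem_take_iff_getElem] at hy
    obtain ⟨i, hi, rfl⟩ := hy
    have hik : i < k := lt_of_lt_of_le hi (min_le_left _ _)
    have hk1 : 1 ≤ k := by omega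
    obtain ⟨hkm, hcv⟩ := hfe hk1
    refine ⟨bval b k, ?_, ?_⟩
    · rw [hsubB, Multiset.mem_coe, List.mem_take_iff_getElem]
      refine ⟨Multiset.card b - 1 - k, by omega, ?_⟩
      rw [bval, List.getD_eq_getElem _ 0 (by omega)]
    · calc (s.sort (· ≤ ·))[i] = (s.sort (· ≤ ·)).getD i 0 :=
            (List.getD_eq_getElem _ 0 (by omega)).symm
        _ ≤ sval s (k - 1) := sval_mono (by omega) (by omega)
        _ ≤ bval b k := hcv
  · -- sums
    rw [hbtr]
    have h1 : gft s b k = ∑ j ∈ Finset.range k, bval b j - ∑ j ∈ Finset.range k, sval s j := by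
      rw [gft, Finset.sum_sub_distrib]
    rw [h1, sum_range_bval b k hkb, sum_range_sval s k hks]
    rw [Multiset.sum_coe, Multiset.sum_coe, msum_eq_sort_sum s]
    have h2 := List.sum_take_add_sum_drop (s.sort (· ≤ ·)) k
    linarith

lemma lb (s b : Multiset ℝ) :
    ∃ s' b' : Multiset ℝ, s' ≤ s ∧ b' ≤ b ∧
      Multiset.card s' + Multiset.card b' = Multiset.card s ∧
      (∀ y ∈ s - s', ∃ x ∈ b - b', y ≤ x) ∧
      btrGFT s b + s.sum = s'.sum + b'.sum := by
  classical
  have hq2 := tradeSize_le s b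
  by_cases hcond : tradeSize s b < Multiset.card b
      ∧ sval s (tradeSize s b - 1) ≤ bval b (tradeSize s b)
  · refine lb_aux s b (tradeSize s b) (by omega) (by omega) ?_ ?_
    · rw [btr_eq, if_pos hcond]
    · intro _; exact ⟨hcond.1, hcond.2⟩
  · refine lb_aux s b (tradeSize s b - 1) (by omega) (by omega) ?_ ?_
    · rw [btr_eq, if_neg hcond]
    · intro h1
      have hq1 : 2 ≤ tradeSize s b := by omega
      refine ⟨by omega, ?_⟩
      calc sval s (tradeSize s b - 1 - 1) ≤ sval s (tradeSize s b - 1) :=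
            sval_mono (by omega) (by omega)
        _ ≤ bval b (tradeSize s b - 1) := ts_pos s b (by omega)

lemma sub_add_sub (a b c d : Multiset ℝ) (h1 : c ≤ a) (h2 : d ≤ b) :
    (a + b) - (c + d) = (a - c) + (b - d) := by
  ext x
  simp only [Multiset.count_sub, Multiset.count_add]
  have := Multiset.count_le_of_le x h1
  have := Multiset.count_le_of_le x h2
  omega

lemma btr_two (s1 b1 s2 b2 : Multiset ℝ) :
    btrGFT s1 b1 + btrGFT s2 b2 ≤ btrGFT (s1 + s2) (b1 + b2) := by
  obtain ⟨s1', b1', hs1, hb1, hc1, hf1, he1⟩ := lb s1 b1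
  obtain ⟨s2', b2', hs2, hb2, hc2, hf2, he2⟩ := lb s2 b2
  have hsubS : (s1 + s2) - (s1' + s2') = (s1 - s1') + (s2 - s2') := sub_add_sub _ _ _ _ hs1 hs2
  have hsubB : (b1 + b2) - (b1' + b2') = (b1 - b1') + (b2 - b2') := sub_add_sub _ _ _ _ hb1 hb2
  have hfeas : ∀ y ∈ (s1 + s2) - (s1' + s2'), ∃ x ∈ (b1 + b2) - (b1' + b2'), y ≤ x := by
    intro y hy
    rw [hsubS, Multiset.mem_add] at hy
    rcases hy with hy | hy
    · obtain ⟨x, hx, hxy⟩ := hf1 y hy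
      exact ⟨x, by rw [hsubB, Multiset.mem_add]; exact Or.inl hx, hxy⟩
    · obtain ⟨x, hx, hxy⟩ := hf2 y hy
      exact ⟨x, by rw [hsubB, Multiset.mem_add]; exact Or.inr hx, hxy⟩
  have key := ub (s1 + s2) (b1 + b2) (s1' + s2') (b1' + b2')
    (add_le_add hs1 hs2) (add_le_add hb1 hb2)
    (by simp only [Multiset.card_add]; omega) hfeas
  have e1 : (s1' + s2').sum = s1'.sum + s2'.sum := Multiset.sum_add _ _
  have e2 : (b1' + b2').sum = b1'.sum + b2'.sum := Multiset.sum_add _ _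
  have e3 : (s1 + s2).sum = s1.sum + s2.sum := Multiset.sum_add _ _
  rw [e1, e2, e3] at key
  linarith

lemma btr_zero : btrGFT 0 0 = 0 := by
  rw [btr_eq]
  have h1 : tradeSize 0 0 = 0 := by
    have := tradeSize_le 0 0
    simpa using this
  rw [h1]
  simp [gft]

end BTRAux


/-- Superadditivity of BTR under market unification (deterministic version): unifying `t`
markets into one never decreases the gains from trade of the Buyer Trade Reduction mechanism. -/
theorem btrGFT_superadditive (t : ℕ) (s b : Fin t → Multiset ℝ) :
    ∑ i, btrGFT (s i) (b i) ≤ btrGFT (∑ i, s i) (∑ i, b i) := by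
  induction t with
  | zero => simp [BTRAux.btr_zero]
  | succ n ih =>
    rw [Fin.sum_univ_succ (f := fun i => btrGFT (s i) (b i)), Fin.sum_univ_succ (f := s),
      Fin.sum_univ_succ (f := b)]
    calc btrGFT (s 0) (b 0) + ∑ i : Fin n, btrGFT (s i.succ) (b i.succ)
        ≤ btrGFT (s 0) (b 0) + btrGFT (∑ i : Fin n, s i.succ) (∑ i : Fin n, b i.succ) := by
          have := ih (fun i => s i.succ) (fun i => b i.succ)
          linarith
      _ ≤ btrGFT (s 0 + ∑ i : Fin n, s i.succ) (b 0 + ∑ i : Fin n, b i.succ) :=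
          BTRAux.btr_two _ _ _ _
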